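/- Let s : ℕⁿ → R, f ∈ R[X₁,…,Xₙ] nonzero, and a ∈ ℕⁿ. Then X^a·f* ∈ Ann(s) (under left-shifting) if and only if Supp(f·Γ(s)) ⊆ [0, a + deg f), where [0,b) = {c ∈ ℤⁿ : 0 ≤ c, c ≱ b}. In particular, if Supp(f·Γ(s)) ⊆ [0, deg f), then f* ∈ Ann(s). -/

import Mathlib

noncomputable section

variable {R : Type*}

/-- Left-shift action of `R[X₁,…,Xₙ]` on sequences indexed by `ℕⁿ`: `(X^a ∘ s)_c = s_{c+a}`. -/
def shiftLF [CommSemiring R] {n : ℕ} (f : MvPolynomial (Fin n) R) (s : (Fin n →₀ ℕ) → R) :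
    (Fin n →₀ ℕ) → R :=
  fun b => ∑ a ∈ f.support, f.coeff a * s (b + a)

/-- Vector of partial degrees `δᵢ f`, as a finitely supported function. -/
def degE [CommSemiring R] {n : ℕ} (f : MvPolynomial (Fin n) R) : Fin n →₀ ℕ :=
  Finsupp.equivFunOnFinite.symm fun i => f.support.sup fun a => a i

/-- The reciprocal polynomial `f* = X^{deg f}·f(X₁⁻¹,…,Xₙ⁻¹)`. -/
def recipP [CommSemiring R] {n : ℕ} (f : MvPolynomial (Fin n) R) : MvPolynomial (Fin n) R :=
  ∑ a ∈ f.support, MvPolynomial.monomial (degE f - a) (f.coeff a)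

/-- Coefficient function of the product `f·Γ(s)` in the power series ring `R[[X₁,…,Xₙ]]`,
where `Γ(s) = ∑_{a ≥ 0} s_a X^a`. -/
def polyMulN [CommSemiring R] {n : ℕ} (f : MvPolynomial (Fin n) R) (G : (Fin n →₀ ℕ) → R) :
    (Fin n →₀ ℕ) → R :=
  fun c => ∑ a ∈ f.support, f.coeff a * (if a ≤ c then G (c - a) else 0)

lemma shiftLF_superset [CommSemiring R] {n : ℕ} (g : MvPolynomial (Fin n) R)
    (s : (Fin n →₀ ℕ) → R) (b : Fin n →₀ ℕ) {T : Finset (Fin n →₀ ℕ)} (hT : g.support ⊆ T) :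
    shiftLF g s b = ∑ m ∈ T, g.coeff m * s (b + m) := by
  show (∑ m ∈ g.support, g.coeff m * s (b + m)) = _
  exact Finset.sum_subset hT (fun m _ hm => by
    rw [MvPolynomial.notMem_support_iff.mp hm, zero_mul])

lemma shiftLF_add [CommSemiring R] {n : ℕ} (p q : MvPolynomial (Fin n) R)
    (s : (Fin n →₀ ℕ) → R) (b : Fin n →₀ ℕ) :
    shiftLF (p + q) s b = shiftLF p s b + shiftLF q s b := by
  rw [shiftLF_superset (p + q) s b (T := p.support ∪ q.support)
      (MvPolynomial.support_add),
    shiftLF_superset p s b (T := p.support ∪ q.support) Finset.subset_union_left,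
    shiftLF_superset q s b (T := p.support ∪ q.support) Finset.subset_union_right,
    ← Finset.sum_add_distrib]
  refine Finset.sum_congr rfl fun m _ => ?_
  rw [MvPolynomial.coeff_add, add_mul]

lemma shiftLF_monomial [CommSemiring R] {n : ℕ} (m : Fin n →₀ ℕ) (r : R)
    (s : (Fin n →₀ ℕ) → R) (b : Fin n →₀ ℕ) :
    shiftLF (MvPolynomial.monomial m r) s b = r * s (b + m) := by
  rw [shiftLF_superset _ s b (T := {m}) (MvPolynomial.support_monomial_subset)]
  simp [MvPolynomial.coeff_monomial]

lemma mem_support_le_degE [CommSemiring R] {n : ℕ} {f : MvPolynomial (Fin n) R}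
    {d : Fin n →₀ ℕ} (hd : d ∈ f.support) : d ≤ degE f := by
  intro i
  simp only [degE, Finsupp.coe_equivFunOnFinite_symm]
  exact Finset.le_sup (f := fun a => a i) hd

lemma key [CommRing R] {n : ℕ} (s : (Fin n →₀ ℕ) → R) (f : MvPolynomial (Fin n) R)
    (a : Fin n →₀ ℕ) :
    shiftLF (MvPolynomial.monomial a 1 * recipP f) s = 0 ↔
      ∀ c : Fin n →₀ ℕ, polyMulN f s c ≠ 0 → ¬ a + degE f ≤ c := by
  have hg : MvPolynomial.monomial a 1 * recipP f
      = ∑ d ∈ f.support, MvPolynomial.monomial (a + (degE f - d)) (f.coeff d) := by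
    rw [recipP, Finset.mul_sum]
    refine Finset.sum_congr rfl fun d _ => ?_
    rw [MvPolynomial.monomial_mul, one_mul]
  have F : ∀ b : Fin n →₀ ℕ, shiftLF (MvPolynomial.monomial a 1 * recipP f) s b
      = ∑ d ∈ f.support, f.coeff d * s (b + (a + (degE f - d))) := by
    intro b
    rw [hg]
    induction f.support using Finset.induction_on with
    | empty => simp [shiftLF]
    | insert _ _ hne ih =>
      rw [Finset.sum_insert hne, Finset.sum_insert hne, shiftLF_add, ih, shiftLF_monomial]
  have hkey : ∀ b : Fin n →₀ ℕ,
      shiftLF (MvPolynomial.monomial a 1 * recipP f) s b = polyMulN f s (b + (a + degE f)) := by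
    intro b
    rw [F, polyMulN]
    refine Finset.sum_congr rfl fun d hd => ?_
    have hle : d ≤ degE f := mem_support_le_degE hd
    have h1 : d ≤ b + (a + degE f) := le_trans hle (by
      intro i; simp only [Finsupp.add_apply]; omega)
    rw [if_pos h1]
    have harg : b + (a + degE f) - d = b + (a + (degE f - d)) := by
      ext i
      have := hle i
      simp only [Finsupp.tsub_apply, Finsupp.add_apply]
      omega
    rw [harg]
  constructor
  · intro h c hc hle
    have hb : c = (c - (a + degE f)) + (a + degE f) := by
      ext i; have := hle i; simp only [Finsupp.tsub_apply, Finsupp.add_apply] at *; omega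
    apply hc
    rw [hb, ← hkey, h]
    rfl
  · intro h
    funext b
    by_contra hb
    have hne : polyMulN f s (b + (a + degE f)) ≠ 0 := by
      rw [← hkey]; simpa using hb
    exact h _ hne (by intro i; simp only [Finsupp.add_apply]; omega)

/-- `X^a·f* ∈ Ann(s)` (left-shifting) iff `Supp(f·Γ(s)) ⊆ [0, a + deg f)`;
in particular `Supp(f·Γ(s)) ⊆ [0, deg f)` implies `f* ∈ Ann(s)`. -/
theorem stmt5 [CommRing R] {n : ℕ} (s : (Fin n →₀ ℕ) → R) (f : MvPolynomial (Fin n) R)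
    (hf : f ≠ 0) (a : Fin n →₀ ℕ) :
    (shiftLF (MvPolynomial.monomial a 1 * recipP f) s = 0 ↔
      ∀ c : Fin n →₀ ℕ, polyMulN f s c ≠ 0 → ¬ a + degE f ≤ c) ∧
    ((∀ c : Fin n →₀ ℕ, polyMulN f s c ≠ 0 → ¬ degE f ≤ c) → shiftLF (recipP f) s = 0) := by
  refine ⟨key s f a, fun h => ?_⟩
  have h2 := (key s f 0).mpr (by simpa using h)
  rw [MvPolynomial.monomial_zero', MvPolynomial.C_1, one_mul] at h2
  exact h2
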